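/- In the front-door structural causal model, the causal effect of Z on Y is identified by back-door adjustment on T: for every value z of Z and every value y of Y, P(Y = y | do(Z = z)) = Σ_{t'} P(Y = y | T = t', Z = z) · P(T = t'), where P(Y = y | do(Z = z)) := P(ω ↦ f_Y(z, U(ω), E_Y(ω)) = y) and the sum ranges over values t' with P(T = t', Z = z) > 0 (equivalently, under the assumption that P(T = t', Z = z) > 0 for all t'). -/

import Mathlib

open MeasureTheory

/-- Conditional probability `P(A | B) = P(A ∩ B) / P(B)`. -/
noncomputable def condP {Ω : Type*} [MeasurableSpace Ω] (μ : Measure Ω)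
    (A B : Set Ω) : ENNReal :=
  μ (A ∩ B) / μ B

/-- Decompose a measure of a set along the fibers of a map into a finite type. -/
lemma sum_fiber_aux {Ω ι : Type*} [MeasurableSpace Ω] [MeasurableSpace ι]
    [Fintype ι] [MeasurableSingletonClass ι]
    (μ : Measure Ω) (S : Set Ω) (hS : MeasurableSet S) (g : Ω → ι) (hg : Measurable g) :
    μ S = ∑ i, μ (S ∩ g ⁻¹' {i}) := by
  have hrepr : S = ⋃ i, S ∩ g ⁻¹' {i} := by
    ext ω; simp
  have hdisj : Pairwise (Function.onFun Disjoint (fun i => S ∩ g ⁻¹' {i})) := by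
    intro i j hij
    refine Set.disjoint_left.2 ?_
    rintro ω ⟨-, hi⟩ ⟨-, hj⟩
    exact hij (hi.symm.trans hj)
  have hmeas : ∀ i, MeasurableSet (S ∩ g ⁻¹' {i}) :=
    fun i => hS.inter (hg (measurableSet_singleton i))
  conv_lhs => rw [hrepr]
  rw [measure_iUnion hdisj hmeas, tsum_fintype]

theorem frontdoor_effect_Z_on_Y
    {Ω 𝒰 𝒯 𝒵 𝒴 ℰT ℰZ ℰY : Type*}
    [MeasurableSpace Ω] [MeasurableSpace 𝒰] [MeasurableSpace 𝒯] [MeasurableSpace 𝒵]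
    [MeasurableSpace 𝒴] [MeasurableSpace ℰT] [MeasurableSpace ℰZ] [MeasurableSpace ℰY]
    [Fintype 𝒰] [Nonempty 𝒰] [MeasurableSingletonClass 𝒰]
    [Fintype 𝒯] [Nonempty 𝒯] [MeasurableSingletonClass 𝒯]
    [Fintype 𝒵] [Nonempty 𝒵] [MeasurableSingletonClass 𝒵]
    [Fintype 𝒴] [Nonempty 𝒴] [MeasurableSingletonClass 𝒴]
    (μ : Measure Ω) [IsProbabilityMeasure μ]
    (U : Ω → 𝒰) (ET : Ω → ℰT) (EZ : Ω → ℰZ) (EY : Ω → ℰY)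
    (hU : Measurable U) (hET : Measurable ET) (hEZ : Measurable EZ) (hEY : Measurable EY)
    (fT : 𝒰 × ℰT → 𝒯) (fZ : 𝒯 × ℰZ → 𝒵) (fY : 𝒵 × 𝒰 × ℰY → 𝒴)
    (hfT : Measurable fT) (hfZ : Measurable fZ) (hfY : Measurable fY)
    -- joint independence of U, E_T, E_Z, E_Y
    (hIndep : ∀ (A : Set 𝒰) (B : Set ℰT) (C : Set ℰZ) (D : Set ℰY),
      MeasurableSet A → MeasurableSet B → MeasurableSet C → MeasurableSet D →
      μ (U ⁻¹' A ∩ ET ⁻¹' B ∩ EZ ⁻¹' C ∩ EY ⁻¹' D)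
        = μ (U ⁻¹' A) * μ (ET ⁻¹' B) * μ (EZ ⁻¹' C) * μ (EY ⁻¹' D))
    -- structural equations
    (T : Ω → 𝒯) (Z : Ω → 𝒵) (Y : Ω → 𝒴)
    (hT : ∀ ω, T ω = fT (U ω, ET ω))
    (hZ : ∀ ω, Z ω = fZ (T ω, EZ ω))
    (hY : ∀ ω, Y ω = fY (Z ω, U ω, EY ω))
    -- positivity
    (hpos : ∀ (t' : 𝒯) (z : 𝒵), 0 < μ {ω | T ω = t' ∧ Z ω = z})
    (z : 𝒵) (y : 𝒴) :
    μ {ω | fY (z, U ω, EY ω) = y}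
      = ∑ t' : 𝒯, condP μ {ω | Y ω = y} {ω | T ω = t' ∧ Z ω = z}
          * μ {ω | T ω = t'} := by
  classical
  -- measurability of the basic sets
  have hBT : ∀ u t', MeasurableSet {e : ℰT | fT (u, e) = t'} := by
    intro u t'
    exact (hfT.comp (measurable_const.prodMk measurable_id)) (measurableSet_singleton t')
  have hBZ : ∀ t', MeasurableSet {e : ℰZ | fZ (t', e) = z} := by
    intro t'
    exact (hfZ.comp (measurable_const.prodMk measurable_id)) (measurableSet_singleton z)
  have hBY : ∀ u, MeasurableSet {e : ℰY | fY (z, u, e) = y} := by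
    intro u
    exact (hfY.comp (measurable_const.prodMk (measurable_const.prodMk measurable_id)))
      (measurableSet_singleton y)
  have hTm : Measurable T := by
    have hTe : T = fun ω => fT (U ω, ET ω) := funext hT
    rw [hTe]; exact hfT.comp (hU.prodMk hET)
  have hZm : Measurable Z := by
    have hZe : Z = fun ω => fZ (T ω, EZ ω) := funext hZ
    rw [hZe]; exact hfZ.comp (hTm.prodMk hEZ)
  have hYm : Measurable Y := by
    have hYe : Y = fun ω => fY (Z ω, U ω, EY ω) := funext hY
    rw [hYe]; exact hfY.comp (hZm.prodMk (hU.prodMk hEY))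
  set a : 𝒰 → ENNReal := fun u => μ (U ⁻¹' {u}) with ha
  set b : 𝒰 → 𝒯 → ENNReal := fun u t' => μ (ET ⁻¹' {e | fT (u, e) = t'}) with hb
  set c : 𝒯 → ENNReal := fun t' => μ (EZ ⁻¹' {e | fZ (t', e) = z}) with hc
  set d : 𝒰 → ENNReal := fun u => μ (EY ⁻¹' {e | fY (z, u, e) = y}) with hd
  -- key decompositions
  have key0 : μ {ω | fY (z, U ω, EY ω) = y} = ∑ u, a u * d u := by
    have hSm : MeasurableSet {ω | fY (z, U ω, EY ω) = y} :=
      (hfY.comp (measurable_const.prodMk (hU.prodMk hEY))) (measurableSet_singleton y)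
    rw [sum_fiber_aux μ _ hSm U hU]
    refine Finset.sum_congr rfl fun u _ => ?_
    have hset : {ω | fY (z, U ω, EY ω) = y} ∩ U ⁻¹' {u}
        = U ⁻¹' {u} ∩ ET ⁻¹' Set.univ ∩ EZ ⁻¹' Set.univ ∩ EY ⁻¹' {e | fY (z, u, e) = y} := by
      ext ω
      simp only [Set.mem_inter_iff, Set.mem_preimage, Set.mem_setOf_eq,
        Set.mem_singleton_iff, Set.mem_univ]
      constructor
      · rintro ⟨hy', hu⟩; exact ⟨⟨⟨hu, trivial⟩, trivial⟩, by rwa [hu] at hy'⟩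
      · rintro ⟨⟨⟨hu, -⟩, -⟩, hy'⟩; exact ⟨by rwa [hu], hu⟩
    rw [hset, hIndep _ _ _ _ (measurableSet_singleton u) MeasurableSet.univ
      MeasurableSet.univ (hBY u)]
    simp only [Set.preimage_univ, measure_univ, mul_one, one_mul]
    rfl
  have key2 : ∀ t', μ ({ω | Y ω = y} ∩ {ω | T ω = t' ∧ Z ω = z})
      = ∑ u, a u * b u t' * c t' * d u := by
    intro t'
    have hSm : MeasurableSet ({ω | Y ω = y} ∩ {ω | T ω = t' ∧ Z ω = z}) := by
      refine (hYm (measurableSet_singleton y)).inter ?_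
      exact (hTm (measurableSet_singleton t')).inter (hZm (measurableSet_singleton z))
    rw [sum_fiber_aux μ _ hSm U hU]
    refine Finset.sum_congr rfl fun u _ => ?_
    have hset : {ω | Y ω = y} ∩ {ω | T ω = t' ∧ Z ω = z} ∩ U ⁻¹' {u}
        = U ⁻¹' {u} ∩ ET ⁻¹' {e | fT (u, e) = t'} ∩ EZ ⁻¹' {e | fZ (t', e) = z}
            ∩ EY ⁻¹' {e | fY (z, u, e) = y} := by
      ext ω
      simp only [Set.mem_inter_iff, Set.mem_preimage, Set.mem_setOf_eq, Set.mem_singleton_iff]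
      constructor
      · rintro ⟨⟨hy', ht', hz'⟩, hu⟩
        refine ⟨⟨⟨hu, ?_⟩, ?_⟩, ?_⟩
        · rw [← hu, ← hT ω]; exact ht'
        · rw [← ht', ← hZ ω]; exact hz'
        · rw [← hu, ← hz', ← hY ω]; exact hy'
      · rintro ⟨⟨⟨hu, het⟩, hez⟩, hey⟩
        have ht' : T ω = t' := by rw [hT ω, hu]; exact het
        have hz' : Z ω = z := by rw [hZ ω, ht']; exact hez
        have hy' : Y ω = y := by rw [hY ω, hz', hu]; exact hey
        exact ⟨⟨hy', ht', hz'⟩, hu⟩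
    rw [hset, hIndep _ _ _ _ (measurableSet_singleton u) (hBT u t') (hBZ t') (hBY u)]
  have key1 : ∀ t', μ {ω | T ω = t' ∧ Z ω = z} = ∑ u, a u * b u t' * c t' := by
    intro t'
    have hSm : MeasurableSet {ω | T ω = t' ∧ Z ω = z} :=
      (hTm (measurableSet_singleton t')).inter (hZm (measurableSet_singleton z))
    rw [sum_fiber_aux μ _ hSm U hU]
    refine Finset.sum_congr rfl fun u _ => ?_
    have hset : {ω | T ω = t' ∧ Z ω = z} ∩ U ⁻¹' {u}
        = U ⁻¹' {u} ∩ ET ⁻¹' {e | fT (u, e) = t'} ∩ EZ ⁻¹' {e | fZ (t', e) = z}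
            ∩ EY ⁻¹' Set.univ := by
      ext ω
      simp only [Set.mem_inter_iff, Set.mem_preimage, Set.mem_setOf_eq, Set.mem_singleton_iff,
        Set.mem_univ]
      constructor
      · rintro ⟨⟨ht', hz'⟩, hu⟩
        refine ⟨⟨⟨hu, ?_⟩, ?_⟩, trivial⟩
        · rw [← hu, ← hT ω]; exact ht'
        · rw [← ht', ← hZ ω]; exact hz'
      · rintro ⟨⟨⟨hu, het⟩, hez⟩, -⟩
        have ht' : T ω = t' := by rw [hT ω, hu]; exact het
        have hz' : Z ω = z := by rw [hZ ω, ht']; exact hez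
        exact ⟨⟨ht', hz'⟩, hu⟩
    rw [hset, hIndep _ _ _ _ (measurableSet_singleton u) (hBT u t') (hBZ t')
      MeasurableSet.univ]
    simp only [Set.preimage_univ, measure_univ, mul_one, one_mul]
    rfl
  have key3 : ∀ t', μ {ω | T ω = t'} = ∑ u, a u * b u t' := by
    intro t'
    have hSm : MeasurableSet {ω | T ω = t'} := hTm (measurableSet_singleton t')
    rw [sum_fiber_aux μ _ hSm U hU]
    refine Finset.sum_congr rfl fun u _ => ?_
    have hset : {ω | T ω = t'} ∩ U ⁻¹' {u}
        = U ⁻¹' {u} ∩ ET ⁻¹' {e | fT (u, e) = t'} ∩ EZ ⁻¹' Set.univ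
            ∩ EY ⁻¹' Set.univ := by
      ext ω
      simp only [Set.mem_inter_iff, Set.mem_preimage, Set.mem_setOf_eq, Set.mem_singleton_iff,
        Set.mem_univ]
      constructor
      · rintro ⟨ht', hu⟩
        exact ⟨⟨⟨hu, by rw [← hu, ← hT ω]; exact ht'⟩, trivial⟩, trivial⟩
      · rintro ⟨⟨⟨hu, het⟩, -⟩, -⟩
        exact ⟨by rw [hT ω, hu]; exact het, hu⟩
    rw [hset, hIndep _ _ _ _ (measurableSet_singleton u) (hBT u t') MeasurableSet.univ
      MeasurableSet.univ]
    simp only [Set.preimage_univ, measure_univ, mul_one, one_mul]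
    rfl
  have keyb : ∀ u, ∑ t', b u t' = 1 := by
    intro u
    have : ∑ t' : 𝒯, μ ((fun e => fT (u, ET e)) ⁻¹' {t'})
        = μ ((fun e => fT (u, ET e)) ⁻¹' ↑(Finset.univ : Finset 𝒯)) :=
      MeasureTheory.sum_measure_preimage_singleton _ fun t' _ =>
        (hfT.comp (measurable_const.prodMk hET)) (measurableSet_singleton t')
    simpa [hb, Set.preimage, measure_univ] using this
  -- rewrite each summand
  have hterm : ∀ t', condP μ {ω | Y ω = y} {ω | T ω = t' ∧ Z ω = z} * μ {ω | T ω = t'}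
      = ∑ u, a u * b u t' * d u := by
    intro t'
    have hc0 : c t' ≠ 0 := by
      intro h
      have := hpos t' z
      rw [key1 t'] at this
      simp [h] at this
    have hcT : c t' ≠ ⊤ := measure_ne_top μ _
    have hS0 : (∑ u, a u * b u t') ≠ 0 := by
      intro h
      have := hpos t' z
      rw [key1 t'] at this
      have hz' : ∑ u, a u * b u t' * c t' = (∑ u, a u * b u t') * c t' := by
        rw [Finset.sum_mul]
      rw [hz', h, zero_mul] at this
      exact lt_irrefl _ this
    have hST : (∑ u, a u * b u t') ≠ ⊤ := by
      rw [← key3 t']; exact measure_ne_top μ _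
    rw [condP, key2 t', key1 t', key3 t']
    have e2 : ∑ u, a u * b u t' * c t' * d u = c t' * ∑ u, a u * b u t' * d u := by
      rw [Finset.mul_sum]; refine Finset.sum_congr rfl fun u _ => by ring
    have e1 : ∑ u, a u * b u t' * c t' = c t' * ∑ u, a u * b u t' := by
      rw [Finset.mul_sum]; refine Finset.sum_congr rfl fun u _ => by ring
    rw [e2, e1, ENNReal.mul_div_mul_left _ _ hc0 hcT, ENNReal.div_mul_cancel hS0 hST]
  rw [key0]
  calc ∑ u, a u * d u
      = ∑ u, (a u * d u) * ∑ t', b u t' := by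
        refine Finset.sum_congr rfl fun u _ => by rw [keyb u, mul_one]
    _ = ∑ u, ∑ t', a u * b u t' * d u := by
        refine Finset.sum_congr rfl fun u _ => ?_
        rw [Finset.mul_sum]
        exact Finset.sum_congr rfl fun t' _ => by ring
    _ = ∑ t', ∑ u, a u * b u t' * d u := Finset.sum_comm
    _ = ∑ t' : 𝒯, condP μ {ω | Y ω = y} {ω | T ω = t' ∧ Z ω = z} * μ {ω | T ω = t'} := by
        refine Finset.sum_congr rfl fun t' _ => (hterm t').symm
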